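/- arXiv:1102.4327 — 8 statements merged into one kernel-verified Lean document; each statement's English description precedes it below -/
import Mathlib

section
/- Let n ≥ 1 and let Iₙ ⊆ ℤ[X,Y] be the ideal generated by X^{n+1} and Rₙ = ∑_{i=0}^{n} (-1)^{i} X^{n-i} Y^{i}. Then for all natural numbers a, b with a + b ≥ 2n, the monomial X^{a} Y^{b} belongs to Iₙ. -/
open MvPolynomial Finset

private lemma stmt3_key1 (n : ℕ) :
    ((X 0 : MvPolynomial (Fin 2) ℤ) + X 1) *
      ∑ i ∈ Finset.range (n + 1),
        ((-1 : MvPolynomial (Fin 2) ℤ) ^ i * (X 0) ^ (n - i) * (X 1) ^ i)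
      = (X 0) ^ (n + 1) + (-1 : MvPolynomial (Fin 2) ℤ) ^ n * (X 1) ^ (n + 1) := by
  induction n with
  | zero => simp
  | succ n ih =>
    have hs : ∑ i ∈ Finset.range (n + 2),
        ((-1 : MvPolynomial (Fin 2) ℤ) ^ i * (X 0) ^ (n + 1 - i) * (X 1) ^ i)
        = X 0 * (∑ i ∈ Finset.range (n + 1),
            ((-1 : MvPolynomial (Fin 2) ℤ) ^ i * (X 0) ^ (n - i) * (X 1) ^ i))
          + (-1) ^ (n + 1) * (X 1) ^ (n + 1) := by
      rw [Finset.sum_range_succ, Finset.mul_sum]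
      congr 1
      · apply Finset.sum_congr rfl
        intro i hi
        rw [Finset.mem_range] at hi
        have h : n + 1 - i = (n - i) + 1 := by omega
        rw [h, pow_succ]
        ring
      · simp
    rw [hs]
    linear_combination (X 0 : MvPolynomial (Fin 2) ℤ) * ih

private lemma stmt3_key2 (n : ℕ) (_hn : 1 ≤ n) :
    (X 1 : MvPolynomial (Fin 2) ℤ) ^ n *
      ∑ i ∈ Finset.range (n + 1),
        ((-1 : MvPolynomial (Fin 2) ℤ) ^ i * (X 0) ^ (n - i) * (X 1) ^ i)
      = (X 0) ^ n * (X 1) ^ n +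
        (X 1) ^ (n + 1) *
          ∑ i ∈ Finset.range n,
            ((-1 : MvPolynomial (Fin 2) ℤ) ^ (i + 1) * (X 0) ^ (n - 1 - i) * (X 1) ^ i) := by
  rw [Finset.sum_range_succ', mul_add, Finset.mul_sum, Finset.mul_sum, add_comm]
  congr 1
  · simp [mul_comm]
  · apply Finset.sum_congr rfl
    intro i hi
    rw [Finset.mem_range] at hi
    have h : n - (i + 1) = n - 1 - i := by omega
    rw [h, pow_succ]
    ring

/-- For n ≥ 1, with Iₙ ⊆ ℤ[X,Y] the ideal generated by X^{n+1} and
Rₙ = ∑_{i=0}^{n} (-1)^{i} X^{n-i} Y^{i}: every monomial X^{a} Y^{b} with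
a + b ≥ 2n lies in Iₙ. -/
theorem stmt3 (n : ℕ) (hn : 1 ≤ n) (a b : ℕ) (hab : 2 * n ≤ a + b) :
    (X 0 : MvPolynomial (Fin 2) ℤ) ^ a * (X 1) ^ b ∈
      Ideal.span
        ({(X 0) ^ (n + 1),
          ∑ i ∈ Finset.range (n + 1),
            ((-1 : MvPolynomial (Fin 2) ℤ) ^ i * (X 0) ^ (n - i) * (X 1) ^ i)} :
          Set (MvPolynomial (Fin 2) ℤ)) := by
  set R : MvPolynomial (Fin 2) ℤ :=
    ∑ i ∈ Finset.range (n + 1),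
      ((-1 : MvPolynomial (Fin 2) ℤ) ^ i * (X 0) ^ (n - i) * (X 1) ^ i) with hR
  set I := Ideal.span ({(X 0) ^ (n + 1), R} : Set (MvPolynomial (Fin 2) ℤ)) with hI
  have hg1 : (X 0 : MvPolynomial (Fin 2) ℤ) ^ (n + 1) ∈ I :=
    Ideal.subset_span (Set.mem_insert _ _)
  have hg2 : R ∈ I :=
    Ideal.subset_span (Set.mem_insert_of_mem _ rfl)
  have hY : (X 1 : MvPolynomial (Fin 2) ℤ) ^ (n + 1) ∈ I := by
    have h : (X 1 : MvPolynomial (Fin 2) ℤ) ^ (n + 1) =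
        (-1) ^ n * ((X 0 + X 1) * R - (X 0) ^ (n + 1)) := by
      rw [stmt3_key1 n]
      have h2 : ((-1 : MvPolynomial (Fin 2) ℤ)) ^ (n * 2) = 1 := by
        rw [mul_comm, pow_mul]; simp
      linear_combination (-((X 1 : MvPolynomial (Fin 2) ℤ) ^ (n + 1))) * h2
    rw [h]
    exact Ideal.mul_mem_left _ _ (I.sub_mem (Ideal.mul_mem_left _ _ hg2) hg1)
  have hXY : (X 0 : MvPolynomial (Fin 2) ℤ) ^ n * (X 1) ^ n ∈ I := by
    have h : (X 0 : MvPolynomial (Fin 2) ℤ) ^ n * (X 1) ^ n =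
        (X 1) ^ n * R - (X 1) ^ (n + 1) *
          ∑ i ∈ Finset.range n,
            ((-1 : MvPolynomial (Fin 2) ℤ) ^ (i + 1) * (X 0) ^ (n - 1 - i) * (X 1) ^ i) := by
      rw [hR, stmt3_key2 n hn]; ring
    rw [h]
    exact I.sub_mem (Ideal.mul_mem_left _ _ hg2) (Ideal.mul_mem_right _ _ hY)
  rcases le_or_gt (n + 1) a with ha | ha
  · obtain ⟨k, hk⟩ := Nat.exists_eq_add_of_le ha
    have h : (X 0 : MvPolynomial (Fin 2) ℤ) ^ a * (X 1) ^ b =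
        ((X 0) ^ k * (X 1) ^ b) * (X 0) ^ (n + 1) := by
      rw [hk, pow_add]; ring
    rw [h]
    exact Ideal.mul_mem_left _ _ hg1
  rcases le_or_gt (n + 1) b with hb | hb
  · obtain ⟨k, hk⟩ := Nat.exists_eq_add_of_le hb
    have h : (X 0 : MvPolynomial (Fin 2) ℤ) ^ a * (X 1) ^ b =
        ((X 0) ^ a * (X 1) ^ k) * (X 1) ^ (n + 1) := by
      rw [hk, pow_add]; ring
    rw [h]
    exact Ideal.mul_mem_left _ _ hY
  · have han : a = n := by omega
    have hbn : b = n := by omega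
    rw [han, hbn]
    exact hXY
end

section
/- Let n ≥ 1 and let Iₙ ⊆ ℤ[X,Y] be the ideal generated by X^{n+1} and Rₙ = ∑_{i=0}^{n} (-1)^{i} X^{n-i} Y^{i}. Then for all natural numbers a, b with a + b = 2n − 1: if a = n or a = n−1, then X^{a} Y^{b} − X^{n-1} Y^{n} ∈ Iₙ, and otherwise X^{a} Y^{b} ∈ Iₙ. -/
open MvPolynomial Finset

lemma sumA {R : Type*} [CommRing R] (x y : R) (n : ℕ) :
    (∑ i ∈ Finset.range (n + 1), ((-1 : R) ^ i * x ^ (n - i) * y ^ i)) * (x + y)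
      = x ^ (n + 1) + (-1 : R) ^ n * y ^ (n + 1) := by
  have h := geom_sum₂_mul x (-y) (n + 1)
  have hsum : (∑ i ∈ Finset.range (n + 1), ((-1 : R) ^ i * x ^ (n - i) * y ^ i))
      = ∑ i ∈ Finset.range (n + 1), x ^ i * (-y) ^ (n + 1 - 1 - i) := by
    rw [← Finset.sum_range_reflect]
    apply Finset.sum_congr rfl
    intro i hi
    rw [Finset.mem_range] at hi
    have h3 : n - (n - i) = i := by omega
    simp only [Nat.add_sub_cancel]
    rw [h3, neg_pow]
    ring
  rw [hsum]
  linear_combination h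

lemma sumB {R : Type*} [CommRing R] (x y : R) (m : ℕ) :
    y ^ m * (∑ i ∈ Finset.range (m + 2), ((-1 : R) ^ i * x ^ (m + 1 - i) * y ^ i))
      = x ^ (m + 1) * y ^ m - x ^ m * y ^ (m + 1)
        + y ^ (m + 2) * ∑ i ∈ Finset.range m, ((-1 : R) ^ i * x ^ (m - 1 - i) * y ^ i) := by
  rw [Finset.mul_sum, Finset.sum_range_succ', Finset.sum_range_succ']
  have hs : (∑ i ∈ Finset.range m, y ^ m * ((-1 : R) ^ (i + 1 + 1) * x ^ (m + 1 - (i + 1 + 1)) * y ^ (i + 1 + 1)))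
      = y ^ (m + 2) * ∑ i ∈ Finset.range m, ((-1 : R) ^ i * x ^ (m - 1 - i) * y ^ i) := by
    rw [Finset.mul_sum]
    apply Finset.sum_congr rfl
    intro i hi
    have h1 : m + 1 - (i + 1 + 1) = m - 1 - i := by omega
    rw [h1]
    ring
  rw [hs]
  norm_num
  ring

/-- For n ≥ 1, with Iₙ ⊆ ℤ[X,Y] the ideal generated by X^{n+1} and
Rₙ = ∑_{i=0}^{n} (-1)^{i} X^{n-i} Y^{i}: for a + b = 2n − 1,
if a = n or a = n − 1 then X^{a} Y^{b} − X^{n-1} Y^{n} ∈ Iₙ, and otherwise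
X^{a} Y^{b} ∈ Iₙ. -/
theorem stmt4 (n : ℕ) (hn : 1 ≤ n) (a b : ℕ) (hab : a + b = 2 * n - 1) :
    ((a = n ∨ a = n - 1) →
      (X 0 : MvPolynomial (Fin 2) ℤ) ^ a * (X 1) ^ b -
          (X 0) ^ (n - 1) * (X 1) ^ n ∈
        Ideal.span
          ({(X 0) ^ (n + 1),
            ∑ i ∈ Finset.range (n + 1),
              ((-1 : MvPolynomial (Fin 2) ℤ) ^ i * (X 0) ^ (n - i) * (X 1) ^ i)} :
            Set (MvPolynomial (Fin 2) ℤ))) ∧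
    (¬(a = n ∨ a = n - 1) →
      (X 0 : MvPolynomial (Fin 2) ℤ) ^ a * (X 1) ^ b ∈
        Ideal.span
          ({(X 0) ^ (n + 1),
            ∑ i ∈ Finset.range (n + 1),
              ((-1 : MvPolynomial (Fin 2) ℤ) ^ i * (X 0) ^ (n - i) * (X 1) ^ i)} :
            Set (MvPolynomial (Fin 2) ℤ))) := by
  obtain ⟨m, rfl⟩ : ∃ m, n = m + 1 := ⟨n - 1, by omega⟩
  simp only [Nat.add_sub_cancel] at *
  set P := MvPolynomial (Fin 2) ℤ
  set Rp : P := ∑ i ∈ Finset.range (m + 1 + 1),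
      ((-1 : P) ^ i * (X 0) ^ (m + 1 - i) * (X 1) ^ i) with hRp
  set I : Ideal P := Ideal.span {(X 0) ^ (m + 1 + 1), Rp} with hI
  have hxI : (X 0 : P) ^ (m + 1 + 1) ∈ I := Ideal.subset_span (by simp)
  have hRI : Rp ∈ I := Ideal.subset_span (by simp)
  have h1 : (-1 : P) ^ (m + 1) * (X 1) ^ (m + 1 + 1) ∈ I := by
    have hA := sumA (X 0 : P) (X 1) (m + 1)
    have he : (-1 : P) ^ (m + 1) * (X 1) ^ (m + 1 + 1)
        = Rp * (X 0 + X 1) - (X 0) ^ (m + 1 + 1) := by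
      rw [hRp]; linear_combination -hA
    rw [he]
    exact I.sub_mem (I.mul_mem_right _ hRI) hxI
  have hyI : (X 1 : P) ^ (m + 1 + 1) ∈ I := by
    have h2 := I.mul_mem_left ((-1 : P) ^ (m + 1)) h1
    rwa [← mul_assoc, ← pow_add, Even.neg_one_pow ⟨m + 1, rfl⟩, one_mul] at h2
  have hdiff : (X 0 : P) ^ (m + 1) * (X 1) ^ m - (X 0) ^ m * (X 1) ^ (m + 1) ∈ I := by
    have hB := sumB (X 0 : P) (X 1) m
    have he : (X 0 : P) ^ (m + 1) * (X 1) ^ m - (X 0) ^ m * (X 1) ^ (m + 1)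
        = (X 1) ^ m * Rp
          - (X 1) ^ (m + 2) * ∑ i ∈ Finset.range m, ((-1 : P) ^ i * (X 0) ^ (m - 1 - i) * (X 1) ^ i) := by
      rw [hRp]; linear_combination -hB
    rw [he]
    exact I.sub_mem (I.mul_mem_left _ hRI) (I.mul_mem_right _ hyI)
  constructor
  · rintro (ha | ha)
    · have hb : b = m := by omega
      rw [ha, hb]
      exact hdiff
    · have hb : b = m + 1 := by omega
      rw [ha, hb, sub_self]
      exact I.zero_mem
  · intro h
    push_neg at h
    have : m + 1 + 1 ≤ a ∨ m + 1 + 1 ≤ b := by omega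
    rcases this with ha | hb
    · obtain ⟨c, rfl⟩ : ∃ c, a = m + 1 + 1 + c := ⟨a - (m + 1 + 1), by omega⟩
      have he : (X 0 : P) ^ (m + 1 + 1 + c) * (X 1) ^ b
          = (X 0) ^ (m + 1 + 1) * ((X 0) ^ c * (X 1) ^ b) := by rw [pow_add]; ring
      rw [he]
      exact I.mul_mem_right _ hxI
    · obtain ⟨c, rfl⟩ : ∃ c, b = m + 1 + 1 + c := ⟨b - (m + 1 + 1), by omega⟩
      have he : (X 0 : P) ^ a * (X 1) ^ (m + 1 + 1 + c)
          = ((X 0) ^ a * (X 1) ^ c) * (X 1) ^ (m + 1 + 1) := by rw [pow_add]; ring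
      rw [he]
      exact I.mul_mem_left _ hyI
end

section
/- Let n ≥ 1 and let Iₙ ⊆ ℤ[X,Y] be the ideal generated by X^{n+1} and Rₙ = ∑_{i=0}^{n} (-1)^{i} X^{n-i} Y^{i}. Then X^{n-1} Y^{n} ∉ Iₙ. -/
open MvPolynomial Finset

private lemma pair_le (a b c d : ℕ) :
    (Finsupp.single (0 : Fin 2) c + Finsupp.single 1 d ≤
      Finsupp.single (0 : Fin 2) a + Finsupp.single 1 b) ↔ c ≤ a ∧ d ≤ b := by
  rw [Finsupp.le_def]
  constructor
  · intro h
    have h0 := h 0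
    have h1 := h 1
    simp [Finsupp.single_apply] at h0 h1
    exact ⟨h0, h1⟩
  · intro ⟨h0, h1⟩ x
    fin_cases x <;> simp [Finsupp.single_apply, h0, h1]

private lemma pair_sub (a b c d : ℕ) :
    (Finsupp.single (0 : Fin 2) a + Finsupp.single 1 b) -
      (Finsupp.single (0 : Fin 2) c + Finsupp.single 1 d) =
      Finsupp.single (0 : Fin 2) (a - c) + Finsupp.single 1 (b - d) := by
  ext x
  fin_cases x <;> simp [Finsupp.tsub_apply, Finsupp.single_apply]

private lemma pair_eq (a b c d : ℕ) :
    (Finsupp.single (0 : Fin 2) a + Finsupp.single 1 b =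
      Finsupp.single (0 : Fin 2) c + Finsupp.single 1 d) ↔ a = c ∧ b = d := by
  constructor
  · intro h
    have h0 := congrFun (congrArg (↑·) h) 0
    have h1 := congrFun (congrArg (↑·) h) 1
    simp [Finsupp.single_apply] at h0 h1
    exact ⟨h0, h1⟩
  · rintro ⟨rfl, rfl⟩; rfl

/-- For n ≥ 1, with Iₙ ⊆ ℤ[X,Y] the ideal generated by X^{n+1} and
Rₙ = ∑_{i=0}^{n} (-1)^{i} X^{n-i} Y^{i}: the monomial X^{n-1} Y^{n} does not
lie in Iₙ (the fundamental class of M is nonzero). -/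
theorem stmt5 (n : ℕ) (hn : 1 ≤ n) :
    (X 0 : MvPolynomial (Fin 2) ℤ) ^ (n - 1) * (X 1) ^ n ∉
      Ideal.span
        ({(X 0) ^ (n + 1),
          ∑ i ∈ Finset.range (n + 1),
            ((-1 : MvPolynomial (Fin 2) ℤ) ^ i * (X 0) ^ (n - i) * (X 1) ^ i)} :
          Set (MvPolynomial (Fin 2) ℤ)) := by
  intro hmem
  rw [Ideal.mem_span_pair] at hmem
  obtain ⟨u, v, huv⟩ := hmem
  -- rewrite everything as monomials
  have hC : (-1 : MvPolynomial (Fin 2) ℤ) = C (-1) := by simp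
  have hR : (∑ i ∈ Finset.range (n + 1),
      ((-1 : MvPolynomial (Fin 2) ℤ) ^ i * (X 0) ^ (n - i) * (X 1) ^ i))
      = ∑ i ∈ Finset.range (n + 1),
        monomial (Finsupp.single 0 (n - i) + Finsupp.single 1 i) ((-1 : ℤ) ^ i) := by
    refine Finset.sum_congr rfl fun i _ => ?_
    rw [hC, ← C_pow, X_pow_eq_monomial, X_pow_eq_monomial, C_mul_monomial,
      monomial_mul]
    simp
  have hXpow : ((X 0 : MvPolynomial (Fin 2) ℤ)) ^ (n + 1)
      = monomial (Finsupp.single 0 (n + 1) + Finsupp.single 1 0) (1 : ℤ) := by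
    rw [X_pow_eq_monomial]
    congr 1
    simp
  have hLHS : (X 0 : MvPolynomial (Fin 2) ℤ) ^ (n - 1) * (X 1) ^ n
      = monomial (Finsupp.single 0 (n - 1) + Finsupp.single 1 n) (1 : ℤ) := by
    rw [X_pow_eq_monomial, X_pow_eq_monomial, monomial_mul, one_mul]
  rw [hR, hXpow, hLHS] at huv
  have key := congrArg (fun p : MvPolynomial (Fin 2) ℤ =>
    coeff (Finsupp.single 0 (n - 1) + Finsupp.single 1 n) p +
    coeff (Finsupp.single 0 n + Finsupp.single 1 (n - 1)) p) huv.symm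
  simp only [coeff_add, Finset.mul_sum, coeff_sum] at key
  -- coefficient of LHS
  have hL1 : coeff (Finsupp.single (0 : Fin 2) (n - 1) + Finsupp.single 1 n)
      (monomial (Finsupp.single (0 : Fin 2) (n - 1) + Finsupp.single 1 n) (1 : ℤ)) = 1 := by
    simp [coeff_monomial]
  have hL2 : coeff (Finsupp.single (0 : Fin 2) n + Finsupp.single 1 (n - 1))
      (monomial (Finsupp.single (0 : Fin 2) (n - 1) + Finsupp.single 1 n) (1 : ℤ)) = 0 := by
    rw [coeff_monomial, if_neg]
    rw [pair_eq]
    rintro ⟨h, -⟩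
    omega
  -- u * X^{n+1} contributes nothing
  have hu1 : coeff (Finsupp.single (0 : Fin 2) (n - 1) + Finsupp.single 1 n)
      (u * monomial (Finsupp.single (0 : Fin 2) (n + 1) + Finsupp.single 1 0) (1 : ℤ)) = 0 := by
    rw [coeff_mul_monomial', if_neg]
    intro h
    have := (pair_le _ _ _ _).mp h
    omega
  have hu2 : coeff (Finsupp.single (0 : Fin 2) n + Finsupp.single 1 (n - 1))
      (u * monomial (Finsupp.single (0 : Fin 2) (n + 1) + Finsupp.single 1 0) (1 : ℤ)) = 0 := by
    rw [coeff_mul_monomial', if_neg]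
    intro h
    have := (pair_le _ _ _ _).mp h
    omega
  -- the two sums coming from v * R
  have hv1 : ∀ i ∈ Finset.range (n + 1),
      coeff (Finsupp.single (0 : Fin 2) (n - 1) + Finsupp.single 1 n)
        (v * monomial (Finsupp.single 0 (n - i) + Finsupp.single 1 i) ((-1 : ℤ) ^ i))
      = if 1 ≤ i then
          coeff (Finsupp.single (0 : Fin 2) (i - 1) + Finsupp.single 1 (n - i)) v * (-1) ^ i
        else 0 := by
    intro i hi
    rw [Finset.mem_range] at hi
    rw [coeff_mul_monomial']
    by_cases h : 1 ≤ i
    · rw [if_pos ((pair_le _ _ _ _).mpr ⟨by omega, by omega⟩), if_pos h, pair_sub,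
        show n - 1 - (n - i) = i - 1 by omega, show n - i = n - i from rfl]
    · rw [if_neg, if_neg h]
      intro hle
      have := (pair_le _ _ _ _).mp hle
      omega
  have hv2 : ∀ i ∈ Finset.range (n + 1),
      coeff (Finsupp.single (0 : Fin 2) n + Finsupp.single 1 (n - 1))
        (v * monomial (Finsupp.single 0 (n - i) + Finsupp.single 1 i) ((-1 : ℤ) ^ i))
      = if i ≤ n - 1 then
          coeff (Finsupp.single (0 : Fin 2) i + Finsupp.single 1 (n - 1 - i)) v * (-1) ^ i
        else 0 := by
    intro i hi
    rw [Finset.mem_range] at hi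
    rw [coeff_mul_monomial']
    by_cases h : i ≤ n - 1
    · rw [if_pos ((pair_le _ _ _ _).mpr ⟨by omega, by omega⟩), if_pos h, pair_sub,
        show n - (n - i) = i by omega]
    · rw [if_neg, if_neg h]
      intro hle
      have := (pair_le _ _ _ _).mp hle
      omega
  rw [Finset.sum_congr rfl hv1, Finset.sum_congr rfl hv2, hL1, hL2, hu1, hu2] at key
  -- evaluate the two sums
  have e1 : (∑ i ∈ Finset.range (n + 1),
      if 1 ≤ i then
        coeff (Finsupp.single (0 : Fin 2) (i - 1) + Finsupp.single 1 (n - i)) v * (-1) ^ i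
      else 0)
      = ∑ j ∈ Finset.range n,
        -(coeff (Finsupp.single (0 : Fin 2) j + Finsupp.single 1 (n - 1 - j)) v * (-1) ^ j) := by
    rw [Finset.sum_range_succ']
    rw [if_neg (by omega : ¬ (1 : ℕ) ≤ 0), add_zero]
    refine Finset.sum_congr rfl fun j hj => ?_
    rw [Finset.mem_range] at hj
    rw [if_pos (by omega), show j + 1 - 1 = j from rfl,
      show n - (j + 1) = n - 1 - j by omega, pow_succ]
    ring
  have e2 : (∑ i ∈ Finset.range (n + 1),
      if i ≤ n - 1 then
        coeff (Finsupp.single (0 : Fin 2) i + Finsupp.single 1 (n - 1 - i)) v * (-1) ^ i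
      else 0)
      = ∑ j ∈ Finset.range n,
        coeff (Finsupp.single (0 : Fin 2) j + Finsupp.single 1 (n - 1 - j)) v * (-1) ^ j := by
    rw [Finset.sum_range_succ, if_neg (by omega), add_zero]
    refine Finset.sum_congr rfl fun j hj => ?_
    rw [Finset.mem_range] at hj
    rw [if_pos (by omega)]
  rw [e1, e2, Finset.sum_neg_distrib] at key
  omega
end

section
/- Let n ≥ 1 and let Iₙ ⊆ ℤ[X,Y] be the ideal generated by X^{n+1} and Rₙ = ∑_{i=0}^{n} (-1)^{i} X^{n-i} Y^{i}. Then the quotient ring ℤ[X,Y]/Iₙ is a free ℤ-module, and the images of the monomials X^{a} Y^{b} for 0 ≤ a ≤ n and 0 ≤ b ≤ n−1 form a ℤ-basis of it. -/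
open MvPolynomial Finset

noncomputable section Stmt6Aux

namespace Stmt6Aux

variable (n : ℕ)

/-- The inner generator `X^(n+1) : ℤ[X]`. -/
abbrev g : Polynomial ℤ := Polynomial.X ^ (n + 1)

lemma monic_g : (g n).Monic := Polynomial.monic_X_pow _

/-- `A n = ℤ[X]/(X^(n+1))`. -/
abbrev A := AdjoinRoot (g n)

/-- The image of `X` in `A n`. -/
abbrev x : A n := AdjoinRoot.root (g n)

/-- The monic version of the relation polynomial, as a polynomial in `Y` over `A n`. -/
def f : Polynomial (A n) :=
  ∑ i ∈ Finset.range (n + 1), Polynomial.C ((-(x n)) ^ (n - i)) * Polynomial.X ^ i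

lemma f_eq : f n = Polynomial.X ^ n +
    ∑ i ∈ Finset.range n, Polynomial.C ((-(x n)) ^ (n - i)) * Polynomial.X ^ i := by
  rw [f, Finset.sum_range_succ, Nat.sub_self, pow_zero, map_one, one_mul, add_comm]

lemma degree_tail_lt :
    (∑ i ∈ Finset.range n, Polynomial.C ((-(x n)) ^ (n - i)) * Polynomial.X ^ i).degree
      < (n : WithBot ℕ) := by
  refine lt_of_le_of_lt (Polynomial.degree_sum_le _ _) ?_
  rw [Finset.sup_lt_iff (by exact WithBot.bot_lt_coe n)]
  intro i hi
  exact lt_of_le_of_lt (Polynomial.degree_C_mul_X_pow_le _ _)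
    (by exact_mod_cast Finset.mem_range.mp hi)

lemma monic_f : (f n).Monic := by
  rw [f_eq]
  exact Polynomial.monic_X_pow_add (degree_tail_lt n)

instance : Nontrivial (A n) :=
  AdjoinRoot.nontrivial _ (by rw [Polynomial.degree_X_pow]; exact_mod_cast Nat.succ_ne_zero n)

lemma natDegree_f : (f n).natDegree = n := by
  have h : (f n).degree = (n : WithBot ℕ) := by
    rw [f_eq]
    rw [Polynomial.degree_add_eq_left_of_degree_lt]
    · exact Polynomial.degree_X_pow n
    · rw [Polynomial.degree_X_pow]; exact degree_tail_lt n
  exact Polynomial.natDegree_eq_of_degree_eq_some h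

/-- The relation polynomial viewed in `ℤ[X][Y]` (outer variable is `Y`). -/
def F : Polynomial (Polynomial ℤ) :=
  ∑ i ∈ Finset.range (n + 1),
    Polynomial.C ((-1 : Polynomial ℤ) ^ i * Polynomial.X ^ (n - i)) * Polynomial.X ^ i

def e0 : MvPolynomial (Fin 1) ℤ ≃ₐ[ℤ] Polynomial ℤ :=
  (MvPolynomial.finSuccEquiv ℤ 0).trans
    (Polynomial.mapAlgEquiv (MvPolynomial.isEmptyAlgEquiv ℤ (Fin 0)))

def e1 : MvPolynomial (Fin 2) ℤ ≃ₐ[ℤ] Polynomial (Polynomial ℤ) :=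
  (MvPolynomial.renameEquiv ℤ (Equiv.swap 0 1)).trans
    ((MvPolynomial.finSuccEquiv ℤ 1).trans (Polynomial.mapAlgEquiv e0))

lemma e0_X : e0 (X 0) = Polynomial.X := by
  simp [e0, MvPolynomial.finSuccEquiv_X_zero]

lemma e1_X0 : e1 (X 0) = Polynomial.C Polynomial.X := by
  have h1 : (Equiv.swap (0 : Fin 2) 1) 0 = 1 := Equiv.swap_apply_left 0 1
  have h2 : (X (1 : Fin 2) : MvPolynomial (Fin 2) ℤ) = X ((0 : Fin 1).succ) := rfl
  simp only [e1, AlgEquiv.trans_apply, MvPolynomial.renameEquiv_apply, MvPolynomial.rename_X, h1,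
    h2, MvPolynomial.finSuccEquiv_X_succ]
  rw [show ((Polynomial.mapAlgEquiv e0) (Polynomial.C (X 0)) : Polynomial (Polynomial ℤ))
      = Polynomial.map (e0 : MvPolynomial (Fin 1) ℤ →+* Polynomial ℤ) (Polynomial.C (X 0)) from rfl,
    Polynomial.map_C]
  rw [show ((e0 : MvPolynomial (Fin 1) ℤ →+* Polynomial ℤ) (X 0)) = e0 (X 0) from rfl, e0_X]

lemma e1_X1 : e1 (X 1) = Polynomial.X := by
  have h1 : (Equiv.swap (0 : Fin 2) 1) 1 = 0 := Equiv.swap_apply_right 0 1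
  simp only [e1, AlgEquiv.trans_apply, MvPolynomial.renameEquiv_apply, MvPolynomial.rename_X, h1,
    MvPolynomial.finSuccEquiv_X_zero]
  simp

/-- The set of generators from the statement. -/
abbrev S : Set (MvPolynomial (Fin 2) ℤ) :=
  {(X 0) ^ (n + 1),
    ∑ i ∈ Finset.range (n + 1),
      ((-1 : MvPolynomial (Fin 2) ℤ) ^ i * (X 0) ^ (n - i) * (X 1) ^ i)}

abbrev Igen : Ideal (Polynomial (Polynomial ℤ)) := Ideal.map Polynomial.C (Ideal.span {g n})

abbrev Jgen : Ideal (Polynomial (Polynomial ℤ)) := Ideal.span {F n}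

lemma e1_R : e1 (∑ i ∈ Finset.range (n + 1),
    ((-1 : MvPolynomial (Fin 2) ℤ) ^ i * (X 0) ^ (n - i) * (X 1) ^ i)) = F n := by
  rw [map_sum, F]
  refine Finset.sum_congr rfl fun i _ => ?_
  rw [map_mul, map_mul, map_pow, map_pow, map_pow, map_neg, map_one, e1_X0, e1_X1]
  rw [map_mul, map_pow, map_pow, map_neg, map_one]

lemma Igen_eq : Igen n = Ideal.span {Polynomial.C (g n)} := by
  show Ideal.map Polynomial.C (Ideal.span {g n}) = _
  rw [Ideal.map_span, Set.image_singleton]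

lemma map_e1 :
    Ideal.map (e1.toRingEquiv : MvPolynomial (Fin 2) ℤ →+* Polynomial (Polynomial ℤ))
      (Ideal.span (S n)) = Igen n ⊔ Jgen n := by
  rw [Ideal.map_span, Set.image_insert_eq, Set.image_singleton, Ideal.span_insert, Igen_eq]
  have h1 : (e1.toRingEquiv : MvPolynomial (Fin 2) ℤ →+* Polynomial (Polynomial ℤ))
      ((X 0) ^ (n + 1)) = Polynomial.C (g n) := by
    show e1 ((X 0) ^ (n + 1)) = _
    rw [map_pow, e1_X0, ← map_pow]
  have h2 : (e1.toRingEquiv : MvPolynomial (Fin 2) ℤ →+* Polynomial (Polynomial ℤ))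
      (∑ i ∈ Finset.range (n + 1),
        ((-1 : MvPolynomial (Fin 2) ℤ) ^ i * (X 0) ^ (n - i) * (X 1) ^ i)) = F n := e1_R n
  rw [h1, h2]

/-- Pass to the quotient of the inner variable. -/
def φ : (Polynomial (Polynomial ℤ) ⧸ Igen n) ≃+* Polynomial (A n) :=
  (Ideal.polynomialQuotientEquivQuotientPolynomial (Ideal.span {g n})).symm

lemma F_map : (F n).map (Ideal.Quotient.mk (Ideal.span {g n})) =
    ∑ i ∈ Finset.range (n + 1),
      Polynomial.C ((-1 : A n) ^ i * (x n) ^ (n - i)) * Polynomial.X ^ i := by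
  rw [F, Polynomial.map_sum]
  refine Finset.sum_congr rfl fun i _ => ?_
  rw [Polynomial.map_mul, Polynomial.map_pow, Polynomial.map_C, Polynomial.map_X]
  congr 1

lemma f_eq_unit_mul : f n = (-1 : Polynomial (A n)) ^ n *
    ∑ i ∈ Finset.range (n + 1),
      Polynomial.C ((-1 : A n) ^ i * (x n) ^ (n - i)) * Polynomial.X ^ i := by
  rw [f, Finset.mul_sum]
  refine Finset.sum_congr rfl fun i hi => ?_
  have hi' : i ≤ n := Nat.lt_succ_iff.mp (Finset.mem_range.mp hi)
  have hneg : ((-1 : A n) ^ n) * ((-1 : A n) ^ i) = (-1 : A n) ^ (n - i) := by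
    have : (-1 : A n) ^ n = (-1 : A n) ^ (n - i) * (-1 : A n) ^ i := by
      rw [← pow_add, Nat.sub_add_cancel hi']
    rw [this, mul_assoc, ← mul_pow]
    simp
  have h1 : ((-1 : Polynomial (A n)) ^ n) = Polynomial.C ((-1 : A n) ^ n) := by
    rw [map_pow, map_neg, map_one]
  rw [h1, ← mul_assoc, ← map_mul, ← mul_assoc, hneg, ← neg_pow]

lemma map_φ : Ideal.map ((φ n : _ →+* _))
    ((Jgen n).map (Ideal.Quotient.mk (Igen n))) = Ideal.span {f n} := by
  rw [Ideal.map_span, Set.image_singleton, Ideal.map_span, Set.image_singleton]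
  have hmk : ((φ n : (Polynomial (Polynomial ℤ) ⧸ Igen n) →+* Polynomial (A n)))
      (Ideal.Quotient.mk (Igen n) (F n)) =
      (F n).map (Ideal.Quotient.mk (Ideal.span {g n})) :=
    Ideal.polynomialQuotientEquivQuotientPolynomial_symm_mk _ _
  rw [hmk, F_map]
  set F' : Polynomial (A n) := ∑ i ∈ Finset.range (n + 1),
      Polynomial.C ((-1 : A n) ^ i * (x n) ^ (n - i)) * Polynomial.X ^ i with hF'
  have h1 : f n = (-1 : Polynomial (A n)) ^ n * F' := f_eq_unit_mul n
  have h2 : F' = (-1 : Polynomial (A n)) ^ n * f n := by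
    rw [h1, ← mul_assoc, ← mul_pow]; simp
  refine le_antisymm ?_ ?_
  · refine Ideal.span_singleton_le_span_singleton.mpr ?_
    exact ⟨(-1 : Polynomial (A n)) ^ n, h2.trans (mul_comm _ _)⟩
  · refine Ideal.span_singleton_le_span_singleton.mpr ?_
    exact ⟨(-1 : Polynomial (A n)) ^ n, h1.trans (mul_comm _ _)⟩

/-- The main ring equivalence. -/
def e : (MvPolynomial (Fin 2) ℤ ⧸ Ideal.span (S n)) ≃+* AdjoinRoot (f n) :=
  (Ideal.quotientEquiv _ _ e1.toRingEquiv rfl).trans <|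
    (Ideal.quotEquivOfEq (map_e1 n)).trans <|
      ((DoubleQuot.quotQuotEquivQuotSup (Igen n) (Jgen n)).symm.trans
        (Ideal.quotientEquiv _ _ (φ n) (map_φ n).symm))

lemma e_mk (p : MvPolynomial (Fin 2) ℤ) :
    e n (Ideal.Quotient.mk _ p) =
      Ideal.Quotient.mk (Ideal.span {f n}) ((φ n) (Ideal.Quotient.mk (Igen n) (e1 p))) := by
  rfl

lemma e_mkX0 : e n (Ideal.Quotient.mk _ (X 0)) = AdjoinRoot.of (f n) (x n) := by
  rw [e_mk, e1_X0]
  have : (φ n)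
      (Ideal.Quotient.mk (Igen n) (Polynomial.C Polynomial.X)) =
      (Polynomial.C Polynomial.X).map (Ideal.Quotient.mk (Ideal.span {g n})) :=
    Ideal.polynomialQuotientEquivQuotientPolynomial_symm_mk _ _
  rw [this, Polynomial.map_C]
  rfl

lemma e_mkX1 : e n (Ideal.Quotient.mk _ (X 1)) = AdjoinRoot.root (f n) := by
  rw [e_mk, e1_X1]
  have : (φ n)
      (Ideal.Quotient.mk (Igen n) Polynomial.X) =
      (Polynomial.X : Polynomial (Polynomial ℤ)).map (Ideal.Quotient.mk (Ideal.span {g n})) :=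
    Ideal.polynomialQuotientEquivQuotientPolynomial_symm_mk _ _
  rw [this, Polynomial.map_X]
  rfl

end Stmt6Aux

end Stmt6Aux

open Stmt6Aux in
/-- For n ≥ 1, with Iₙ ⊆ ℤ[X,Y] the ideal generated by X^{n+1} and
Rₙ = ∑_{i=0}^{n} (-1)^{i} X^{n-i} Y^{i}: the quotient ℤ[X,Y]/Iₙ is a free
ℤ-module, and the images of the monomials X^{a} Y^{b} for 0 ≤ a ≤ n and
0 ≤ b ≤ n − 1 form a ℤ-basis of it. -/
theorem stmt6 (n : ℕ) (hn : 1 ≤ n) :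
    ∃ B : Module.Basis (Fin (n + 1) × Fin n) ℤ
        (MvPolynomial (Fin 2) ℤ ⧸
          Ideal.span
            ({(X 0) ^ (n + 1),
              ∑ i ∈ Finset.range (n + 1),
                ((-1 : MvPolynomial (Fin 2) ℤ) ^ i * (X 0) ^ (n - i) * (X 1) ^ i)} :
              Set (MvPolynomial (Fin 2) ℤ))),
      ∀ (a : Fin (n + 1)) (b : Fin n),
        B (a, b) =
          Ideal.Quotient.mk _ ((X 0 : MvPolynomial (Fin 2) ℤ) ^ (a : ℕ) * (X 1) ^ (b : ℕ)) := by
  classical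
  let pb1 := AdjoinRoot.powerBasis' (monic_g n)
  let pb2 := AdjoinRoot.powerBasis' (monic_f n)
  have hd1 : pb1.dim = n + 1 := by
    simp [pb1, AdjoinRoot.powerBasis'_dim]
  have hd2 : pb2.dim = n := by
    simp [pb2, AdjoinRoot.powerBasis'_dim, natDegree_f]
  let b0 : Module.Basis (Fin (n + 1) × Fin n) ℤ (AdjoinRoot (f n)) :=
    (pb1.basis.smulTower pb2.basis).reindex
      (Equiv.prodCongr (finCongr hd1) (finCongr hd2))
  let B : Module.Basis (Fin (n + 1) × Fin n) ℤ
      (MvPolynomial (Fin 2) ℤ ⧸ Ideal.span (S n)) :=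
    b0.map (e n).symm.toAddEquiv.toIntLinearEquiv
  refine ⟨B, fun a b => ?_⟩
  have hb0 : b0 (a, b) = (x n) ^ (a : ℕ) • (AdjoinRoot.root (f n)) ^ (b : ℕ) := by
    rw [Module.Basis.reindex_apply]
    have : (Equiv.prodCongr (finCongr hd1) (finCongr hd2)).symm (a, b)
        = ((finCongr hd1).symm a, (finCongr hd2).symm b) := rfl
    rw [this, Module.Basis.smulTower_apply, PowerBasis.basis_eq_pow, PowerBasis.basis_eq_pow]
    have hg1 : pb1.gen = x n := rfl
    have hg2 : pb2.gen = AdjoinRoot.root (f n) := rfl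
    rw [hg1, hg2]
    norm_num
  have key : (x n) ^ (a : ℕ) • (AdjoinRoot.root (f n)) ^ (b : ℕ)
      = e n (Ideal.Quotient.mk _
          ((X 0 : MvPolynomial (Fin 2) ℤ) ^ (a : ℕ) * (X 1) ^ (b : ℕ))) := by
    rw [map_mul, map_pow, map_pow, map_mul, map_pow, map_pow, e_mkX0, e_mkX1]
    rw [Algebra.smul_def, AdjoinRoot.algebraMap_eq, map_pow]
  show b0.map (e n).symm.toAddEquiv.toIntLinearEquiv (a, b) = _
  rw [Module.Basis.map_apply, hb0, key]
  simp
end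

section
/- Let n ≥ 1 and let Iₙ ⊆ ℤ[X,Y] be the ideal generated by X^{n+1} and Rₙ = ∑_{i=0}^{n} (-1)^{i} X^{n-i} Y^{i}. For 0 ≤ j ≤ n−1 set C_j = ∑_{i=0}^{j} (−1)^{j−i} X^{n−i} Y^{i}. Then for all k with 0 ≤ k ≤ n−1: C_j · X^{k} Y^{n−1−k} − X^{n−1} Y^{n} ∈ Iₙ if k = j, and C_j · X^{k} Y^{n−1−k} ∈ Iₙ if k ≠ j. -/
open MvPolynomial Finset

private lemma sq1 {R : Type*} [CommRing R] (a : ℕ) : ((-1:R)^a) * (-1)^a = 1 := by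
  rw [← pow_add, show a + a = 2*a by omega, pow_mul]; norm_num

private lemma DD {R : Type*} [CommRing R] (x y : R) : ∀ n j : ℕ, j ≤ n →
    (x + y) * ∑ i ∈ Finset.range (j+1), ((-1:R)^i * x^(n-i) * y^i)
      = x^(n+1) + (-1)^j * x^(n-j) * y^(j+1) := by
  intro n j
  induction j with
  | zero => intro h; simp [Finset.sum_range_one, pow_succ]; ring
  | succ j ih =>
    intro h
    have hj : j ≤ n := by omega
    rw [Finset.sum_range_succ, mul_add, ih hj]
    obtain ⟨p, rfl⟩ : ∃ p, n = j+1+p := ⟨n-(j+1), by omega⟩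
    rw [show j+1+p-j = p+1 by omega, show j+1+p-(j+1) = p by omega]
    ring

private lemma CC {R : Type*} [CommRing R] (x y : R) : ∀ n j : ℕ, j ≤ n →
    (x + y) * ∑ i ∈ Finset.range (j+1), ((-1:R)^(j-i) * x^(n-i) * y^i)
      = (-1)^j * x^(n+1) + x^(n-j) * y^(j+1) := by
  intro n j
  induction j with
  | zero => intro h; simp [Finset.sum_range_one, pow_succ]; ring
  | succ j ih =>
    intro h
    have hj : j ≤ n := by omega
    have hstep : ∑ i ∈ Finset.range (j+1), ((-1:R)^(j+1-i) * x^(n-i) * y^i)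
        = -∑ i ∈ Finset.range (j+1), ((-1:R)^(j-i) * x^(n-i) * y^i) := by
      rw [← Finset.sum_neg_distrib]
      refine Finset.sum_congr rfl fun i hi => ?_
      have hij : i ≤ j := Finset.mem_range_succ_iff.mp hi
      rw [show j+1-i = (j-i)+1 by omega, pow_succ]; ring
    rw [Finset.sum_range_succ, hstep, mul_add, mul_neg, ih hj, Nat.sub_self, pow_zero]
    obtain ⟨p, rfl⟩ : ∃ p, n = j+1+p := ⟨n-(j+1), by omega⟩
    rw [show j+1+p-j = p+1 by omega, show j+1+p-(j+1) = p by omega]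
    ring

private lemma EE {R : Type*} [CommRing R] (x y : R) (m : ℕ) :
    (x + y) * ∑ t ∈ Finset.range m, ((-1:R)^t * x^(m-1-t) * y^t)
      = x^m - (-1)^m * y^m := by
  cases m with
  | zero => simp
  | succ m' =>
    have h := DD x y m' m' le_rfl
    rw [show m'-m' = 0 by omega, pow_zero, mul_one] at h
    have hsum : ∑ t ∈ Finset.range (m'+1), ((-1:R)^t * x^(m'+1-1-t) * y^t)
        = ∑ t ∈ Finset.range (m'+1), ((-1:R)^t * x^(m'-t) * y^t) := by
      refine Finset.sum_congr rfl fun t ht => ?_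
      rw [show m'+1-1-t = m'-t by omega]
    rw [hsum, h, pow_succ]; ring

private lemma hsXY : (X 0 + X 1 : MvPolynomial (Fin 2) ℤ) ≠ 0 := by
  intro h
  have h2 := congrArg (MvPolynomial.eval fun _ => (1:ℤ)) h
  simp at h2

/-- For n ≥ 1, with Iₙ ⊆ ℤ[X,Y] the ideal generated by X^{n+1} and
Rₙ = ∑_{i=0}^{n} (-1)^{i} X^{n-i} Y^{i}, and C_j = ∑_{i=0}^{j} (−1)^{j−i} X^{n−i} Y^{i}
for 0 ≤ j ≤ n−1: for each 0 ≤ k ≤ n−1, C_j · X^{k} Y^{n−1−k} − X^{n−1} Y^{n} ∈ Iₙ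
if k = j, and C_j · X^{k} Y^{n−1−k} ∈ Iₙ if k ≠ j. -/
theorem stmt8 (n j k : ℕ) (hn : 1 ≤ n) (hj : j ≤ n - 1) (hk : k ≤ n - 1) :
    (k = j →
      (∑ i ∈ Finset.range (j + 1),
          ((-1 : MvPolynomial (Fin 2) ℤ) ^ (j - i) * (X 0) ^ (n - i) * (X 1) ^ i)) *
            ((X 0) ^ k * (X 1) ^ (n - 1 - k)) -
          (X 0) ^ (n - 1) * (X 1) ^ n ∈
        Ideal.span
          ({(X 0) ^ (n + 1),
            ∑ i ∈ Finset.range (n + 1),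
              ((-1 : MvPolynomial (Fin 2) ℤ) ^ i * (X 0) ^ (n - i) * (X 1) ^ i)} :
            Set (MvPolynomial (Fin 2) ℤ))) ∧
    (k ≠ j →
      (∑ i ∈ Finset.range (j + 1),
          ((-1 : MvPolynomial (Fin 2) ℤ) ^ (j - i) * (X 0) ^ (n - i) * (X 1) ^ i)) *
            ((X 0) ^ k * (X 1) ^ (n - 1 - k)) ∈
        Ideal.span
          ({(X 0) ^ (n + 1),
            ∑ i ∈ Finset.range (n + 1),
              ((-1 : MvPolynomial (Fin 2) ℤ) ^ i * (X 0) ^ (n - i) * (X 1) ^ i)} :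
            Set (MvPolynomial (Fin 2) ℤ))) := by
  constructor
  · intro hkj
    subst hkj
    obtain ⟨m, rfl⟩ : ∃ m, n = k + m + 1 := ⟨n - k - 1, by omega⟩
    rw [Ideal.mem_span_pair]
    refine ⟨-(-1:MvPolynomial (Fin 2) ℤ)^k * (-1)^m * (X 0)^k *
        (∑ t ∈ Finset.range m, ((-1:MvPolynomial (Fin 2) ℤ)^t * (X 0)^(m-1-t) * (X 1)^t)),
      (-1:MvPolynomial (Fin 2) ℤ)^k * (-1)^m * (X 0)^(k+m), ?_⟩
    have hC := CC (X 0 : MvPolynomial (Fin 2) ℤ) (X 1) (k+m+1) k (by omega)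
    have hD := DD (X 0 : MvPolynomial (Fin 2) ℤ) (X 1) (k+m+1) (k+m+1) le_rfl
    have hE := EE (X 0 : MvPolynomial (Fin 2) ℤ) (X 1) m
    rw [show k+m+1-k = m+1 by omega] at hC
    rw [Nat.sub_self, pow_zero, mul_one] at hD
    rw [show k+m+1-1-k = m by omega, show k+m+1-1 = k+m by omega]
    apply mul_left_cancel₀ hsXY
    linear_combination (-(-1:MvPolynomial (Fin 2) ℤ)^k*(-1)^m*(X 0)^k*(X 0)^(k+m+2)) * hE
      + ((-1:MvPolynomial (Fin 2) ℤ)^k*(-1)^m*(X 0)^(k+m)) * hD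
      + (-((X 0:MvPolynomial (Fin 2) ℤ)^k*(X 1)^m)) * hC
      + ((-1:MvPolynomial (Fin 2) ℤ)^k*(X 0)^(2*k+m+2)*(X 1)^m
          - (-1:MvPolynomial (Fin 2) ℤ)^k*(-1)^k*(X 0)^(k+m)*(X 1)^(k+m+2)) * sq1 (R := MvPolynomial (Fin 2) ℤ) m
      + (-((X 0:MvPolynomial (Fin 2) ℤ)^(k+m)*(X 1)^(k+m+2))) * sq1 (R := MvPolynomial (Fin 2) ℤ) k
  · intro hne
    rcases Nat.lt_or_ge k j with hlt | hge
    · -- k < j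
      obtain ⟨e, rfl⟩ : ∃ e, j = k + e + 1 := ⟨j - k - 1, by omega⟩
      obtain ⟨f, rfl⟩ : ∃ f, n = k + e + f + 2 := ⟨n - k - e - 2, by omega⟩
      rw [Ideal.mem_span_pair]
      refine ⟨-(-1:MvPolynomial (Fin 2) ℤ)^(k+e+f+2) * (X 0)^k * (X 1)^e *
          (∑ t ∈ Finset.range (f+1),
            ((-1:MvPolynomial (Fin 2) ℤ)^t * (X 0)^(f+1-1-t) * (X 1)^t)),
        (-1:MvPolynomial (Fin 2) ℤ)^(k+e+f+2) * (X 0)^(k+f+1) * (X 1)^e, ?_⟩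
      have hC := CC (X 0 : MvPolynomial (Fin 2) ℤ) (X 1) (k+e+f+2) (k+e+1) (by omega)
      have hD := DD (X 0 : MvPolynomial (Fin 2) ℤ) (X 1) (k+e+f+2) (k+e+f+2) le_rfl
      have hE := EE (X 0 : MvPolynomial (Fin 2) ℤ) (X 1) (f+1)
      rw [show k+e+f+2-(k+e+1) = f+1 by omega] at hC
      rw [Nat.sub_self, pow_zero, mul_one] at hD
      rw [show k+e+f+2-1-k = e+f+1 by omega]
      apply mul_left_cancel₀ hsXY
      linear_combination
        (-(-1:MvPolynomial (Fin 2) ℤ)^(k+e+f+2) * (X 0)^k * (X 1)^e * (X 0)^(k+e+f+3)) * hE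
        + ((-1:MvPolynomial (Fin 2) ℤ)^(k+e+f+2) * (X 0)^(k+f+1) * (X 1)^e) * hD
        + (-((X 0:MvPolynomial (Fin 2) ℤ)^k * (X 1)^(e+f+1))) * hC
        + (-((-1:MvPolynomial (Fin 2) ℤ)^k*(-1)^e) * (X 0)^(2*k+e+f+3) * (X 1)^(e+f+1)
            + ((-1:MvPolynomial (Fin 2) ℤ)^k*(-1)^k*(-1)^e*(-1)^e)
              * (X 0)^(k+f+1) * (X 1)^(k+2*e+f+3)) * sq1 (R := MvPolynomial (Fin 2) ℤ) f
        + ((-1:MvPolynomial (Fin 2) ℤ)^k*(-1)^k * (X 0)^(k+f+1) * (X 1)^(k+2*e+f+3)) * sq1 (R := MvPolynomial (Fin 2) ℤ) e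
        + ((X 0:MvPolynomial (Fin 2) ℤ)^(k+f+1) * (X 1)^(k+2*e+f+3)) * sq1 (R := MvPolynomial (Fin 2) ℤ) k
    · -- j < k
      have hjk : j < k := by omega
      rw [Ideal.mem_span_pair]
      refine ⟨∑ i ∈ Finset.range (j+1),
          ((-1:MvPolynomial (Fin 2) ℤ)^(j-i) * (X 0)^(k-1-i) * (X 1)^(n-1-k+i)), 0, ?_⟩
      rw [zero_mul, add_zero, Finset.sum_mul, Finset.sum_mul]
      refine Finset.sum_congr rfl fun i hi => ?_
      have hij : i ≤ j := Finset.mem_range_succ_iff.mp hi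
      obtain ⟨q, rfl⟩ : ∃ q, n = k + q + 1 := ⟨n - k - 1, by omega⟩
      obtain ⟨p, rfl⟩ : ∃ p, k = i + p + 1 := ⟨k - i - 1, by omega⟩
      rw [show i+p+1-1-i = p by omega, show i+p+1+q+1-1-(i+p+1)+i = q+i by omega,
        show i+p+1+q+1-i = p+q+2 by omega, show i+p+1+q+1-1-(i+p+1) = q by omega]
      ring
end

section
/- Let n ≥ 2, let Iₙ ⊆ ℤ[X,Y] be the ideal generated by X^{n+1} and Rₙ = ∑_{i=0}^{n} (-1)^{i} X^{n-i} Y^{i}, and for 0 ≤ j ≤ n−1 set C_j = ∑_{i=0}^{j} (−1)^{j−i} X^{n−i} Y^{i}. Fix 1 ≤ p ≤ n−1 and arbitrary integers c₀, …, c_p. Then for every m with 0 ≤ m ≤ p, (∑_{i=0}^{p} c_i X^{i} Y^{p−i}) · C_{n−p−1+m} · X^{n−p−1} − c_m · X^{n−1} Y^{n} ∈ Iₙ. -/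
open MvPolynomial Finset


-- Step A: geometric identity and b^(n+1) = 0, and a^n b^(n-1) = a^(n-1) b^n
theorem auxcalc {R : Type*} [CommRing R] (n p m : ℕ) (hn : 2 ≤ n) (hp1 : 1 ≤ p)
    (hp2 : p ≤ n - 1) (hm : m ≤ p) (d : ℕ → R) (a b : R)
    (ha : a ^ (n + 1) = 0)
    (hR : (∑ i ∈ Finset.range (n + 1), (-1 : R) ^ i * a ^ (n - i) * b ^ i) = 0) :
    (∑ i ∈ Finset.range (p + 1), d i * a ^ i * b ^ (p - i)) *
      (∑ i ∈ Finset.range (n - p - 1 + m + 1),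
        (-1 : R) ^ (n - p - 1 + m - i) * a ^ (n - i) * b ^ i) * a ^ (n - p - 1)
      = d m * a ^ (n - 1) * b ^ n := by
  -- geometric series identity
  have h1 : (∑ i ∈ range (n + 1), a ^ i * (-b) ^ (n - i))
      = ∑ i ∈ range (n + 1), (-1 : R) ^ i * a ^ (n - i) * b ^ i := by
    rw [← Finset.sum_range_reflect (fun i => a ^ i * (-b) ^ (n - i)) (n + 1)]
    apply Finset.sum_congr rfl
    intro i hi
    simp only [mem_range, Nat.lt_succ_iff] at hi
    have e1 : n + 1 - 1 - i = n - i := by omega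
    have e2 : n - (n - i) = i := by omega
    rw [e1, e2, neg_pow]
    ring
  have hgeom : (∑ i ∈ range (n + 1), (-1 : R) ^ i * a ^ (n - i) * b ^ i) * (a + b)
      = a ^ (n + 1) - (-b) ^ (n + 1) := by
    rw [← h1]
    have hg := geom_sum₂_mul a (-b) (n + 1)
    rw [sub_neg_eq_add] at hg
    rw [← hg]
    simp only [Nat.add_sub_cancel]
  have hnb : (-b) ^ (n + 1) = 0 := by
    have := hgeom
    rw [hR, zero_mul, ha, zero_sub] at this
    have := congrArg Neg.neg this
    simpa using this.symm
  have hb : b ^ (n + 1) = 0 := by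
    have : b ^ (n + 1) = (-1 : R) ^ (n + 1) * (-b) ^ (n + 1) := by
      rw [← mul_pow]; norm_num
    rw [this, hnb, mul_zero]
  -- zero lemmas
  have hza : ∀ u v : ℕ, n + 1 ≤ u → a ^ u * b ^ v = 0 := by
    intro u v hu
    have : a ^ u = a ^ (n + 1) * a ^ (u - (n + 1)) := by
      rw [← pow_add]; congr 1; omega
    rw [this, ha, zero_mul, zero_mul]
  have hzb : ∀ u v : ℕ, n + 1 ≤ v → a ^ u * b ^ v = 0 := by
    intro u v hv
    have : b ^ v = b ^ (n + 1) * b ^ (v - (n + 1)) := by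
      rw [← pow_add]; congr 1; omega
    rw [this, hb, zero_mul, mul_zero]
  -- key relation a^n b^(n-1) = a^(n-1) b^n
  have hM : a ^ n * b ^ (n - 1) = a ^ (n - 1) * b ^ n := by
    have h6 : (∑ i ∈ range (n + 1), ((-1 : R) ^ i * a ^ (n - i) * b ^ i) * a ^ (n - 1)) = 0 := by
      rw [← Finset.sum_mul, hR, zero_mul]
    rw [Finset.sum_range_succ] at h6
    rw [Finset.sum_eq_single_of_mem (n - 1) (mem_range.2 (by omega))
      (by
        intro k hk hkne
        simp only [mem_range] at hk
        have : (-1 : R) ^ k * a ^ (n - k) * b ^ k * a ^ (n - 1)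
            = (-1 : R) ^ k * b ^ k * (a ^ ((n - k) + (n - 1)) * b ^ 0) := by ring
        rw [this, hza ((n - k) + (n - 1)) 0 (by omega), mul_zero])] at h6
    have e1 : n - (n - 1) = 1 := by omega
    have e2 : n - n = 0 := by omega
    have e3 : (-1 : R) ^ n = (-1 : R) ^ (n - 1) * (-1) := by
      rw [← pow_succ]; congr 1; omega
    rw [e1, e2, e3] at h6
    have key : (-1 : R) ^ (n - 1) * (a ^ 1 * a ^ (n - 1) * b ^ (n - 1) - a ^ (n - 1) * b ^ n) = 0 := by
      linear_combination h6
    have hu : (-1 : R) ^ (n - 1) * (-1 : R) ^ (n - 1) = 1 := by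
      rw [← mul_pow]; norm_num
    have key2 : a ^ 1 * a ^ (n - 1) * b ^ (n - 1) - a ^ (n - 1) * b ^ n = 0 := by
      have := congrArg (fun z => (-1 : R) ^ (n - 1) * z) key
      simp only [mul_zero] at this
      rw [← mul_assoc, hu, one_mul] at this
      exact this
    have ean : a ^ 1 * a ^ (n - 1) = a ^ n := by
      rw [← pow_add]; congr 1; omega
    rw [ean] at key2
    exact sub_eq_zero.mp key2
  -- pointwise reshaping lemma
  have hF : ∀ i k : ℕ,
      d i * a ^ i * b ^ (p - i) * ((-1 : R) ^ (n - p - 1 + m - k) * a ^ (n - k) * b ^ k) * a ^ (n - p - 1)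
        = d i * (-1 : R) ^ (n - p - 1 + m - k) * (a ^ (i + (n - k) + (n - p - 1)) * b ^ ((p - i) + k)) := by
    intro i k
    rw [pow_add, pow_add, pow_add]
    ring
  rw [Finset.sum_mul, Finset.sum_mul]
  refine (Finset.sum_eq_single_of_mem m (Finset.mem_range.2 (by omega)) ?_).trans ?_
  · -- terms i ≠ m vanish
    intro i hi hne
    simp only [mem_range, Nat.lt_succ_iff] at hi
    rw [Finset.mul_sum, Finset.sum_mul]
    rcases Nat.lt_or_ge i m with hilt | hige
    · -- i < m : two surviving terms cancel
      have hsub : ({n - p - 1 + i, n - p - 1 + i + 1} : Finset ℕ) ⊆ range (n - p - 1 + m + 1) := by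
        simp only [Finset.insert_subset_iff, Finset.singleton_subset_iff, mem_range]
        omega
      rw [← Finset.sum_subset hsub (by
        intro k hk hk'
        simp only [mem_range, Nat.lt_succ_iff] at hk
        simp only [mem_insert, mem_singleton, not_or] at hk'
        rw [hF]
        rcases Nat.lt_or_ge k (n - p - 1 + i) with h | h
        · rw [hza (i + (n - k) + (n - p - 1)) ((p - i) + k) (by omega), mul_zero]
        · rw [hzb (i + (n - k) + (n - p - 1)) ((p - i) + k) (by omega), mul_zero])]
      rw [Finset.sum_insert (by simp), Finset.sum_singleton, hF, hF]
      have e1 : i + (n - (n - p - 1 + i)) + (n - p - 1) = n := by omega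
      have e2 : (p - i) + (n - p - 1 + i) = n - 1 := by omega
      have e3 : i + (n - (n - p - 1 + i + 1)) + (n - p - 1) = n - 1 := by omega
      have e4 : (p - i) + (n - p - 1 + i + 1) = n := by omega
      have e5 : n - p - 1 + m - (n - p - 1 + i) = (m - i - 1) + 1 := by omega
      have e6 : n - p - 1 + m - (n - p - 1 + i + 1) = m - i - 1 := by omega
      rw [e1, e2, e3, e4, e5, e6, hM, pow_succ]
      ring
    · -- i > m : every term vanishes
      apply Finset.sum_eq_zero
      intro k hk
      simp only [mem_range, Nat.lt_succ_iff] at hk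
      rw [hF, hza (i + (n - k) + (n - p - 1)) ((p - i) + k) (by omega), mul_zero]
  · -- the i = m term
    rw [Finset.mul_sum, Finset.sum_mul]
    refine (Finset.sum_eq_single_of_mem (n - p - 1 + m) (Finset.mem_range.2 (by omega)) ?_).trans ?_
    · intro k hk hkne
      simp only [mem_range, Nat.lt_succ_iff] at hk
      rw [hF, hza (m + (n - k) + (n - p - 1)) ((p - m) + k) (by omega), mul_zero]
    · rw [hF]
      have e1 : m + (n - (n - p - 1 + m)) + (n - p - 1) = n := by omega
      have e2 : (p - m) + (n - p - 1 + m) = n - 1 := by omega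
      have e3 : n - p - 1 + m - (n - p - 1 + m) = 0 := by omega
      rw [e1, e2, e3, hM, pow_zero]
      ring

/-- Lemma 1.2 computation: for n ≥ 2, Iₙ = (X^{n+1}, Rₙ) ⊆ ℤ[X,Y],
C_j = ∑_{i=0}^{j} (−1)^{j−i} X^{n−i} Y^{i}, 1 ≤ p ≤ n−1, integers c₀,…,c_p, and
0 ≤ m ≤ p:
(∑_{i=0}^{p} c_i X^{i} Y^{p−i}) · C_{n−p−1+m} · X^{n−p−1} − c_m · X^{n−1} Y^{n} ∈ Iₙ. -/
theorem stmt9 (n p m : ℕ) (hn : 2 ≤ n) (hp1 : 1 ≤ p) (hp2 : p ≤ n - 1)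
    (hm : m ≤ p) (c : ℕ → ℤ) :
    (∑ i ∈ Finset.range (p + 1),
        (MvPolynomial.C (c i) * (X 0) ^ i * (X 1) ^ (p - i))) *
          (∑ i ∈ Finset.range (n - p - 1 + m + 1),
            ((-1 : MvPolynomial (Fin 2) ℤ) ^ (n - p - 1 + m - i) *
              (X 0) ^ (n - i) * (X 1) ^ i)) *
          (X 0) ^ (n - p - 1) -
        MvPolynomial.C (c m) * (X 0) ^ (n - 1) * (X 1) ^ n ∈
      Ideal.span
        ({(X 0) ^ (n + 1),
          ∑ i ∈ Finset.range (n + 1),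
            ((-1 : MvPolynomial (Fin 2) ℤ) ^ i * (X 0) ^ (n - i) * (X 1) ^ i)} :
          Set (MvPolynomial (Fin 2) ℤ)) := by
  set I : Ideal (MvPolynomial (Fin 2) ℤ) := Ideal.span
      ({(X 0) ^ (n + 1),
        ∑ i ∈ Finset.range (n + 1),
          ((-1 : MvPolynomial (Fin 2) ℤ) ^ i * (X 0) ^ (n - i) * (X 1) ^ i)} :
        Set (MvPolynomial (Fin 2) ℤ)) with hI
  rw [← Ideal.Quotient.eq]
  have ha : (Ideal.Quotient.mk I (X 0 : MvPolynomial (Fin 2) ℤ)) ^ (n + 1) = 0 := by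
    rw [← map_pow]
    exact Ideal.Quotient.eq_zero_iff_mem.2 (Ideal.subset_span (by simp))
  have hR : (∑ i ∈ Finset.range (n + 1),
      (-1 : MvPolynomial (Fin 2) ℤ ⧸ I) ^ i *
        (Ideal.Quotient.mk I (X 0 : MvPolynomial (Fin 2) ℤ)) ^ (n - i) *
        (Ideal.Quotient.mk I (X 1 : MvPolynomial (Fin 2) ℤ)) ^ i) = 0 := by
    have h0 : Ideal.Quotient.mk I (∑ i ∈ Finset.range (n + 1),
        ((-1 : MvPolynomial (Fin 2) ℤ) ^ i * (X 0) ^ (n - i) * (X 1) ^ i)) = 0 :=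
      Ideal.Quotient.eq_zero_iff_mem.2 (Ideal.subset_span (by simp))
    simpa only [map_sum, map_mul, map_pow, map_neg, map_one] using h0
  have := auxcalc n p m hn hp1 hp2 hm
      (fun i => Ideal.Quotient.mk I (MvPolynomial.C (c i)))
      (Ideal.Quotient.mk I (X 0 : MvPolynomial (Fin 2) ℤ))
      (Ideal.Quotient.mk I (X 1 : MvPolynomial (Fin 2) ℤ)) ha hR
  simpa only [map_sum, map_mul, map_pow, map_neg, map_one] using this
end

section
/- Let n ≥ 2 and let Iₙ ⊆ ℤ[X,Y] be the ideal generated by X^{n+1} and Rₙ = ∑_{i=0}^{n} (-1)^{i} X^{n-i} Y^{i}. Fix integers 0 ≤ j ≤ q ≤ n−1 and a function a : ℕ → ℤ with a(0) = 0. Then (∑_{i=0}^{n} a(i) X^{i} Y^{n−i}) · Y^{n−q+j−1} · X^{q−j} − (a(n−q+j) + a(n−q+j−1)) · X^{n−1} Y^{n} ∈ Iₙ. -/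
open MvPolynomial Finset

namespace Stmt10Aux

local notation "xx" => (MvPolynomial.X 0 : MvPolynomial (Fin 2) ℤ)
local notation "yy" => (MvPolynomial.X 1 : MvPolynomial (Fin 2) ℤ)

noncomputable def Rn (n : ℕ) : MvPolynomial (Fin 2) ℤ :=
  ∑ i ∈ Finset.range (n + 1),
    ((-1 : MvPolynomial (Fin 2) ℤ) ^ i * (X 0) ^ (n - i) * (X 1) ^ i)

noncomputable def In (n : ℕ) : Ideal (MvPolynomial (Fin 2) ℤ) :=
  Ideal.span {(X 0 : MvPolynomial (Fin 2) ℤ) ^ (n + 1), Rn n}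

lemma xpow_mem (n : ℕ) : xx ^ (n + 1) ∈ In n :=
  Ideal.subset_span (Set.mem_insert _ _)

lemma Rn_mem (n : ℕ) : Rn n ∈ In n :=
  Ideal.subset_span (Set.mem_insert_of_mem _ rfl)

lemma neg_one_pow_sq (k : ℕ) :
    ((-1 : MvPolynomial (Fin 2) ℤ) ^ k) * (-1 : MvPolynomial (Fin 2) ℤ) ^ k = 1 := by
  rw [← pow_add]
  exact Even.neg_one_pow ⟨k, rfl⟩

lemma mem_of_xbig (n A B : ℕ) (h : n + 1 ≤ A) : xx ^ A * yy ^ B ∈ In n := by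
  have e : xx ^ A * yy ^ B = xx ^ (n + 1) * (xx ^ (A - (n + 1)) * yy ^ B) := by
    rw [← mul_assoc, ← pow_add]
    congr 2
    omega
  rw [e]
  exact Ideal.mul_mem_right _ _ (xpow_mem n)

lemma Rn_succ (n : ℕ) :
    Rn (n + 1) = xx * Rn n + (-1 : MvPolynomial (Fin 2) ℤ) ^ (n + 1) * yy ^ (n + 1) := by
  rw [Rn, Rn, Finset.sum_range_succ, Finset.mul_sum]
  congr 1
  · apply Finset.sum_congr rfl
    intro i hi
    rw [Finset.mem_range] at hi
    have h1 : n + 1 - i = (n - i) + 1 := by omega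
    rw [h1, pow_succ]
    ring
  · rw [Nat.sub_self, pow_zero]
    ring

lemma telescope (n : ℕ) :
    (xx + yy) * Rn n = xx ^ (n + 1) + (-1 : MvPolynomial (Fin 2) ℤ) ^ n * yy ^ (n + 1) := by
  induction n with
  | zero => simp [Rn]
  | succ n ih =>
    rw [Rn_succ]
    linear_combination xx * ih

lemma ypow_mem (n : ℕ) : yy ^ (n + 1) ∈ In n := by
  have h : (-1 : MvPolynomial (Fin 2) ℤ) ^ n * ((xx + yy) * Rn n - xx ^ (n + 1)) ∈ In n :=
    Ideal.mul_mem_left _ _ (sub_mem (Ideal.mul_mem_left _ _ (Rn_mem n)) (xpow_mem n))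
  have e : (-1 : MvPolynomial (Fin 2) ℤ) ^ n * ((xx + yy) * Rn n - xx ^ (n + 1))
      = yy ^ (n + 1) := by
    rw [telescope]
    linear_combination yy ^ (n + 1) * neg_one_pow_sq n
  rwa [e] at h

lemma mem_of_ybig (n A B : ℕ) (h : n + 1 ≤ B) : xx ^ A * yy ^ B ∈ In n := by
  have e : xx ^ A * yy ^ B = yy ^ (n + 1) * (xx ^ A * yy ^ (B - (n + 1))) := by
    rw [mul_comm (xx ^ A) (yy ^ (B - (n+1))), ← mul_assoc, ← pow_add]
    rw [show n + 1 + (B - (n+1)) = B by omega]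
    ring
  rw [e]
  exact Ideal.mul_mem_right _ _ (ypow_mem n)

lemma key_rel (n : ℕ) (hn : 1 ≤ n) :
    xx ^ n * yy ^ (n - 1) - xx ^ (n - 1) * yy ^ n ∈ In n := by
  obtain ⟨m, rfl⟩ : ∃ m, n = m + 1 := ⟨n - 1, by omega⟩
  simp only [Nat.add_sub_cancel]
  set f : ℕ → MvPolynomial (Fin 2) ℤ :=
    fun i => xx ^ m * ((-1 : MvPolynomial (Fin 2) ℤ) ^ i * xx ^ (m + 1 - i) * yy ^ i) with hf
  have hRf : xx ^ m * Rn (m + 1) = ∑ i ∈ Finset.range (m + 2), f i := by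
    rw [Rn, Finset.mul_sum]
  have hsum : ∑ i ∈ Finset.range m, f i ∈ In (m + 1) := by
    apply Ideal.sum_mem
    intro i hi
    rw [Finset.mem_range] at hi
    have e : f i = (-1 : MvPolynomial (Fin 2) ℤ) ^ i * (xx ^ (m + (m + 1 - i)) * yy ^ i) := by
      rw [hf]
      simp only
      rw [pow_add]
      ring
    rw [e]
    exact Ideal.mul_mem_left _ _ (mem_of_xbig _ _ _ (by omega))
  have hp : xx ^ m * Rn (m + 1) - ∑ i ∈ Finset.range m, f i ∈ In (m + 1) :=
    sub_mem (Ideal.mul_mem_left _ _ (Rn_mem _)) hsum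
  have e1 : xx ^ m * Rn (m + 1) - ∑ i ∈ Finset.range m, f i
      = (-1 : MvPolynomial (Fin 2) ℤ) ^ m * (xx ^ (m + 1) * yy ^ m - xx ^ m * yy ^ (m + 1)) := by
    rw [hRf, Finset.sum_range_succ, Finset.sum_range_succ]
    simp only [hf]
    rw [show m + 1 - m = 1 by omega, show m + 1 - (m + 1) = 0 by omega]
    ring
  have hfinal : (-1 : MvPolynomial (Fin 2) ℤ) ^ m *
      (xx ^ m * Rn (m + 1) - ∑ i ∈ Finset.range m, f i) ∈ In (m + 1) :=
    Ideal.mul_mem_left _ _ hp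
  have e2 : (-1 : MvPolynomial (Fin 2) ℤ) ^ m *
      (xx ^ m * Rn (m + 1) - ∑ i ∈ Finset.range m, f i)
      = xx ^ (m + 1) * yy ^ m - xx ^ m * yy ^ (m + 1) := by
    rw [e1]
    linear_combination (xx ^ (m + 1) * yy ^ m - xx ^ m * yy ^ (m + 1)) * neg_one_pow_sq m
  rwa [e2] at hfinal

end Stmt10Aux

open Stmt10Aux in
/-- Proposition 2.1 (first half) computation: for n ≥ 2, Iₙ = (X^{n+1}, Rₙ) ⊆ ℤ[X,Y],
0 ≤ j ≤ q ≤ n−1 and a : ℕ → ℤ with a(0) = 0: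
(∑_{i=0}^{n} a(i) X^{i} Y^{n−i}) · Y^{n−q+j−1} · X^{q−j}
 − (a(n−q+j) + a(n−q+j−1)) · X^{n−1} Y^{n} ∈ Iₙ. -/
theorem stmt10 (n q j : ℕ) (hn : 2 ≤ n) (hj : j ≤ q) (hq : q ≤ n - 1)
    (a : ℕ → ℤ) (h0 : a 0 = 0) :
    (∑ i ∈ Finset.range (n + 1),
        (MvPolynomial.C (a i) * (X 0) ^ i * (X 1) ^ (n - i))) *
          (X 1) ^ (n - q + j - 1) * (X 0) ^ (q - j) -
        MvPolynomial.C (a (n - q + j) + a (n - q + j - 1)) *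
          (X 0) ^ (n - 1) * (X 1) ^ n ∈
      Ideal.span
        ({(X 0) ^ (n + 1),
          ∑ i ∈ Finset.range (n + 1),
            ((-1 : MvPolynomial (Fin 2) ℤ) ^ i * (X 0) ^ (n - i) * (X 1) ^ i)} :
          Set (MvPolynomial (Fin 2) ℤ)) := by
  show _ ∈ Stmt10Aux.In n
  have hT : (∑ i ∈ Finset.range (n + 1),
      ((if i = n - q + j then
          MvPolynomial.C (a (n - q + j)) * ((X 0 : MvPolynomial (Fin 2) ℤ) ^ (n - 1) * (X 1) ^ n)
        else 0)
       + (if i = n - q + j - 1 then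
          MvPolynomial.C (a (n - q + j - 1)) * ((X 0 : MvPolynomial (Fin 2) ℤ) ^ (n - 1) * (X 1) ^ n)
        else 0)))
      = MvPolynomial.C (a (n - q + j) + a (n - q + j - 1)) *
          (X 0 : MvPolynomial (Fin 2) ℤ) ^ (n - 1) * (X 1) ^ n := by
    rw [Finset.sum_add_distrib, Finset.sum_ite_eq', Finset.sum_ite_eq',
      if_pos (Finset.mem_range.mpr (by omega)), if_pos (Finset.mem_range.mpr (by omega)),
      map_add]
    ring
  rw [Finset.sum_mul, Finset.sum_mul, ← hT, ← Finset.sum_sub_distrib]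
  apply Ideal.sum_mem
  intro i hi
  rw [Finset.mem_range] at hi
  have key : MvPolynomial.C (a i) * (X 0 : MvPolynomial (Fin 2) ℤ) ^ i * (X 1) ^ (n - i) *
      (X 1) ^ (n - q + j - 1) * (X 0) ^ (q - j)
      = MvPolynomial.C (a i) *
        ((X 0 : MvPolynomial (Fin 2) ℤ) ^ (i + (q - j)) * (X 1) ^ ((n - i) + (n - q + j - 1))) := by
    rw [pow_add, pow_add]
    ring
  by_cases hA : i = n - q + j
  · rw [if_pos hA, if_neg (by omega), key,
      show i + (q - j) = n by omega, show (n - i) + (n - q + j - 1) = n - 1 by omega, hA]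
    have e : MvPolynomial.C (a (n - q + j)) *
        ((X 0 : MvPolynomial (Fin 2) ℤ) ^ n * (X 1) ^ (n - 1)) -
        (MvPolynomial.C (a (n - q + j)) *
          ((X 0 : MvPolynomial (Fin 2) ℤ) ^ (n - 1) * (X 1) ^ n) + 0)
        = MvPolynomial.C (a (n - q + j)) *
          ((X 0 : MvPolynomial (Fin 2) ℤ) ^ n * (X 1) ^ (n - 1) - (X 0) ^ (n - 1) * (X 1) ^ n) := by
      ring
    rw [e]
    exact Ideal.mul_mem_left _ _ (key_rel n (by omega))
  · by_cases hB : i = n - q + j - 1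
    · rw [if_neg hA, if_pos hB, key,
        show i + (q - j) = n - 1 by omega, show (n - i) + (n - q + j - 1) = n by omega, hB]
      have e : MvPolynomial.C (a (n - q + j - 1)) *
          ((X 0 : MvPolynomial (Fin 2) ℤ) ^ (n - 1) * (X 1) ^ n) -
          (0 + MvPolynomial.C (a (n - q + j - 1)) *
            ((X 0 : MvPolynomial (Fin 2) ℤ) ^ (n - 1) * (X 1) ^ n)) = 0 := by
        ring
      rw [e]
      exact (Stmt10Aux.In n).zero_mem
    · rw [if_neg hA, if_neg hB, add_zero, sub_zero, key]
      rcases (show n + 1 ≤ i + (q - j) ∨ n + 1 ≤ (n - i) + (n - q + j - 1) by omega) with hc | hc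
      · exact Ideal.mul_mem_left _ _ (mem_of_xbig n _ _ hc)
      · exact Ideal.mul_mem_left _ _ (mem_of_ybig n _ _ hc)
end

section
/- Let n ≥ 2 and let Iₙ ⊆ ℤ[X,Y] be the ideal generated by X^{n+1} and Rₙ = ∑_{i=0}^{n} (-1)^{i} X^{n-i} Y^{i}. Fix integers 1 ≤ s ≤ p ≤ n−1 and arbitrary integers d₀, …, d_p. Then (∑_{i=0}^{p} d_i X^{i} Y^{p−i}) · Y^{n−p+s−1} · X^{n−s} − (d_s + d_{s−1}) · X^{n−1} Y^{n} ∈ Iₙ. -/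
open MvPolynomial Finset

private lemma auxGeom {A : Type*} [CommRing A] (x y : A) (N : ℕ) :
    (x + y) * ∑ i ∈ Finset.range (N + 1), ((-1 : A) ^ i * x ^ (N - i) * y ^ i)
      = x ^ (N + 1) + (-1 : A) ^ N * y ^ (N + 1) := by
  induction N with
  | zero => simp
  | succ N ih =>
    rw [Finset.sum_range_succ']
    have hsum : ∑ i ∈ Finset.range (N + 1), ((-1 : A) ^ (i + 1) * x ^ (N + 1 - (i + 1)) * y ^ (i + 1))
        = -y * ∑ i ∈ Finset.range (N + 1), ((-1 : A) ^ i * x ^ (N - i) * y ^ i) := by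
      rw [Finset.mul_sum]
      refine Finset.sum_congr rfl fun i hi => ?_
      rw [show N + 1 - (i + 1) = N - i from by omega]
      ring
    rw [hsum]
    simp only [pow_zero, Nat.sub_zero, one_mul, mul_one]
    linear_combination (-y) * ih

/-- Proposition 2.1 (second half) computation: for n ≥ 2, Iₙ = (X^{n+1}, Rₙ) ⊆ ℤ[X,Y],
1 ≤ s ≤ p ≤ n−1 and integers d₀,…,d_p:
(∑_{i=0}^{p} d_i X^{i} Y^{p−i}) · Y^{n−p+s−1} · X^{n−s}
 − (d_s + d_{s−1}) · X^{n−1} Y^{n} ∈ Iₙ. -/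
theorem stmt11 (n p s : ℕ) (hn : 2 ≤ n) (hs1 : 1 ≤ s) (hs2 : s ≤ p)
    (hp : p ≤ n - 1) (d : ℕ → ℤ) :
    (∑ i ∈ Finset.range (p + 1),
        (MvPolynomial.C (d i) * (X 0) ^ i * (X 1) ^ (p - i))) *
          (X 1) ^ (n - p + s - 1) * (X 0) ^ (n - s) -
        MvPolynomial.C (d s + d (s - 1)) * (X 0) ^ (n - 1) * (X 1) ^ n ∈
      Ideal.span
        ({(X 0) ^ (n + 1),
          ∑ i ∈ Finset.range (n + 1),
            ((-1 : MvPolynomial (Fin 2) ℤ) ^ i * (X 0) ^ (n - i) * (X 1) ^ i)} :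
          Set (MvPolynomial (Fin 2) ℤ)) := by
  set Rn : MvPolynomial (Fin 2) ℤ :=
    ∑ i ∈ Finset.range (n + 1),
      ((-1 : MvPolynomial (Fin 2) ℤ) ^ i * (X 0) ^ (n - i) * (X 1) ^ i) with hRn
  set I : Ideal (MvPolynomial (Fin 2) ℤ) :=
    Ideal.span {(X 0 : MvPolynomial (Fin 2) ℤ) ^ (n + 1), Rn} with hIdef
  have hxm : (X 0 : MvPolynomial (Fin 2) ℤ) ^ (n + 1) ∈ I := Ideal.subset_span (by simp)
  have hRm : Rn ∈ I := Ideal.subset_span (by simp)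
  -- Y^(n+1) ∈ I
  have hy : (X 1 : MvPolynomial (Fin 2) ℤ) ^ (n + 1) ∈ I := by
    have haux := auxGeom (X 0 : MvPolynomial (Fin 2) ℤ) (X 1) n
    rw [← hRn] at haux
    rcases neg_one_pow_eq_or (MvPolynomial (Fin 2) ℤ) n with h | h <;> rw [h] at haux
    · have he : (X 1 : MvPolynomial (Fin 2) ℤ) ^ (n + 1)
          = (X 0 + X 1) * Rn - (X 0) ^ (n + 1) := by linear_combination -haux
      rw [he]; exact sub_mem (Ideal.mul_mem_left _ _ hRm) hxm
    · have he : (X 1 : MvPolynomial (Fin 2) ℤ) ^ (n + 1)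
          = (X 0) ^ (n + 1) - (X 0 + X 1) * Rn := by linear_combination haux
      rw [he]; exact sub_mem hxm (Ideal.mul_mem_left _ _ hRm)
  -- monomials with large X-degree
  have hmonoX : ∀ (a b : ℕ) (q : MvPolynomial (Fin 2) ℤ), n + 1 ≤ a →
      q * (X 0) ^ a * (X 1) ^ b ∈ I := by
    intro a b q ha
    have e : (X 0 : MvPolynomial (Fin 2) ℤ) ^ (a - (n + 1)) * (X 0) ^ (n + 1) = (X 0) ^ a := by
      rw [← pow_add]; congr 1; omega
    have he : q * (X 0 : MvPolynomial (Fin 2) ℤ) ^ a * (X 1) ^ b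
        = (q * (X 0) ^ (a - (n + 1)) * (X 1) ^ b) * (X 0) ^ (n + 1) := by
      linear_combination (-(q * (X 1 : MvPolynomial (Fin 2) ℤ) ^ b)) * e
    rw [he]; exact Ideal.mul_mem_left _ _ hxm
  -- monomials with large Y-degree
  have hmonoY : ∀ (a b : ℕ) (q : MvPolynomial (Fin 2) ℤ), n + 1 ≤ b →
      q * (X 0) ^ a * (X 1) ^ b ∈ I := by
    intro a b q hb
    have e : (X 1 : MvPolynomial (Fin 2) ℤ) ^ (b - (n + 1)) * (X 1) ^ (n + 1) = (X 1) ^ b := by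
      rw [← pow_add]; congr 1; omega
    have he : q * (X 0 : MvPolynomial (Fin 2) ℤ) ^ a * (X 1) ^ b
        = (q * (X 0) ^ a * (X 1) ^ (b - (n + 1))) * (X 1) ^ (n + 1) := by
      linear_combination (-(q * (X 0 : MvPolynomial (Fin 2) ℤ) ^ a)) * e
    rw [he]; exact Ideal.mul_mem_left _ _ hy
  -- key relation X^n Y^(n-1) ≡ X^(n-1) Y^n
  have hkey : (X 0 : MvPolynomial (Fin 2) ℤ) ^ n * (X 1) ^ (n - 1)
      - (X 0) ^ (n - 1) * (X 1) ^ n ∈ I := by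
    obtain ⟨m, rfl⟩ : ∃ m, n = m + 2 := ⟨n - 2, by omega⟩
    have hsum : ∑ i ∈ Finset.range (m + 1),
        ((X 0 : MvPolynomial (Fin 2) ℤ) ^ (m + 1) * ((-1) ^ i * (X 0) ^ (m + 2 - i) * (X 1) ^ i))
        ∈ I := by
      refine Ideal.sum_mem _ fun i hi => ?_
      rw [Finset.mem_range] at hi
      have e : (X 0 : MvPolynomial (Fin 2) ℤ) ^ (m + 1) * (X 0) ^ (m + 2 - i)
          = (X 0) ^ (m - i) * (X 0) ^ (m + 2 + 1) := by
        rw [← pow_add, ← pow_add]; congr 1; omega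
      have he : (X 0 : MvPolynomial (Fin 2) ℤ) ^ (m + 1) * ((-1) ^ i * (X 0) ^ (m + 2 - i) * (X 1) ^ i)
          = ((-1) ^ i * (X 0) ^ (m - i) * (X 1) ^ i) * (X 0) ^ (m + 2 + 1) := by
        linear_combination ((-1 : MvPolynomial (Fin 2) ℤ) ^ i * (X 1) ^ i) * e
      rw [he]; exact Ideal.mul_mem_left _ _ hxm
    have hexp : (X 0 : MvPolynomial (Fin 2) ℤ) ^ (m + 1) * Rn
        = ∑ i ∈ Finset.range (m + 1),
            ((X 0 : MvPolynomial (Fin 2) ℤ) ^ (m + 1) * ((-1) ^ i * (X 0) ^ (m + 2 - i) * (X 1) ^ i))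
          + ((-1) ^ (m + 1) * ((X 0) ^ (m + 2) * (X 1) ^ (m + 1))
              + (-1) ^ (m + 2) * ((X 0) ^ (m + 1) * (X 1) ^ (m + 2))) := by
      rw [hRn, Finset.mul_sum, Finset.sum_range_succ,
        show Finset.range (m + 2) = Finset.range ((m + 1) + 1) from rfl, Finset.sum_range_succ,
        show m + 2 - (m + 2) = 0 from by omega, show m + 2 - (m + 1) = 1 from by omega]
      ring
    have hmem2 : ((-1 : MvPolynomial (Fin 2) ℤ) ^ (m + 1) * ((X 0) ^ (m + 2) * (X 1) ^ (m + 1))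
        + (-1) ^ (m + 2) * ((X 0) ^ (m + 1) * (X 1) ^ (m + 2))) ∈ I := by
      have h1 : (X 0 : MvPolynomial (Fin 2) ℤ) ^ (m + 1) * Rn ∈ I := Ideal.mul_mem_left _ _ hRm
      have h2 := I.sub_mem h1 hsum
      rw [hexp] at h2
      simpa using h2
    rw [show m + 2 - 1 = m + 1 from by omega]
    rcases neg_one_pow_eq_or (MvPolynomial (Fin 2) ℤ) (m + 1) with h | h
    · have h2 : ((-1 : MvPolynomial (Fin 2) ℤ)) ^ (m + 2) = -1 := by
        rw [show m + 2 = (m + 1) + 1 from rfl, pow_succ, h]; ring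
      rw [h, h2] at hmem2
      have he : (X 0 : MvPolynomial (Fin 2) ℤ) ^ (m + 2) * (X 1) ^ (m + 1)
          - (X 0) ^ (m + 1) * (X 1) ^ (m + 2)
          = 1 * ((X 0) ^ (m + 2) * (X 1) ^ (m + 1)) + (-1) * ((X 0) ^ (m + 1) * (X 1) ^ (m + 2)) := by
        ring
      rw [he]; exact hmem2
    · have h2 : ((-1 : MvPolynomial (Fin 2) ℤ)) ^ (m + 2) = 1 := by
        rw [show m + 2 = (m + 1) + 1 from rfl, pow_succ, h]; ring
      rw [h, h2] at hmem2
      have he : (X 0 : MvPolynomial (Fin 2) ℤ) ^ (m + 2) * (X 1) ^ (m + 1)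
          - (X 0) ^ (m + 1) * (X 1) ^ (m + 2)
          = -((-1) * ((X 0) ^ (m + 2) * (X 1) ^ (m + 1)) + 1 * ((X 0) ^ (m + 1) * (X 1) ^ (m + 2))) := by
        ring
      rw [he]; exact neg_mem hmem2
  -- main computation
  rw [Finset.sum_mul, Finset.sum_mul]
  have hc : (MvPolynomial.C (d s + d (s - 1)) : MvPolynomial (Fin 2) ℤ) * (X 0) ^ (n - 1) * (X 1) ^ n
      = ∑ i ∈ Finset.range (p + 1),
        ((if i = s then MvPolynomial.C (d s) * (X 0 : MvPolynomial (Fin 2) ℤ) ^ (n - 1) * (X 1) ^ n else 0)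
          + (if i = s - 1 then MvPolynomial.C (d (s - 1)) * (X 0 : MvPolynomial (Fin 2) ℤ) ^ (n - 1) * (X 1) ^ n else 0)) := by
    rw [Finset.sum_add_distrib, Finset.sum_ite_eq' (Finset.range (p + 1)) s,
      Finset.sum_ite_eq' (Finset.range (p + 1)) (s - 1),
      if_pos (Finset.mem_range.mpr (by omega)), if_pos (Finset.mem_range.mpr (by omega)),
      map_add]
    ring
  rw [hc, ← Finset.sum_sub_distrib]
  refine Ideal.sum_mem _ fun i hi => ?_
  rw [Finset.mem_range] at hi
  by_cases h1 : i = s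
  · subst h1
    rw [if_pos rfl, if_neg (show i ≠ i - 1 by omega)]
    have e1 : (X 0 : MvPolynomial (Fin 2) ℤ) ^ i * (X 0) ^ (n - i) = (X 0) ^ n := by
      rw [← pow_add]; congr 1; omega
    have e2 : (X 1 : MvPolynomial (Fin 2) ℤ) ^ (p - i) * (X 1) ^ (n - p + i - 1) = (X 1) ^ (n - 1) := by
      rw [← pow_add]; congr 1; omega
    have he : MvPolynomial.C (d i) * (X 0 : MvPolynomial (Fin 2) ℤ) ^ i * (X 1) ^ (p - i)
          * (X 1) ^ (n - p + i - 1) * (X 0) ^ (n - i)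
        - (MvPolynomial.C (d i) * (X 0) ^ (n - 1) * (X 1) ^ n + 0)
        = MvPolynomial.C (d i) * ((X 0) ^ n * (X 1) ^ (n - 1) - (X 0) ^ (n - 1) * (X 1) ^ n) := by
      linear_combination (MvPolynomial.C (d i) * (X 1 : MvPolynomial (Fin 2) ℤ) ^ (p - i)
          * (X 1) ^ (n - p + i - 1)) * e1
        + (MvPolynomial.C (d i) * (X 0 : MvPolynomial (Fin 2) ℤ) ^ n) * e2
    rw [he]; exact Ideal.mul_mem_left _ _ hkey
  by_cases h2 : i = s - 1
  · subst h2
    rw [if_neg h1, if_pos rfl]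
    have e1 : (X 0 : MvPolynomial (Fin 2) ℤ) ^ (s - 1) * (X 0) ^ (n - s) = (X 0) ^ (n - 1) := by
      rw [← pow_add]; congr 1; omega
    have e2 : (X 1 : MvPolynomial (Fin 2) ℤ) ^ (p - (s - 1)) * (X 1) ^ (n - p + s - 1) = (X 1) ^ n := by
      rw [← pow_add]; congr 1; omega
    have he : MvPolynomial.C (d (s - 1)) * (X 0 : MvPolynomial (Fin 2) ℤ) ^ (s - 1) * (X 1) ^ (p - (s - 1))
          * (X 1) ^ (n - p + s - 1) * (X 0) ^ (n - s)
        - (0 + MvPolynomial.C (d (s - 1)) * (X 0) ^ (n - 1) * (X 1) ^ n)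
        = 0 := by
      linear_combination (MvPolynomial.C (d (s - 1)) * (X 1 : MvPolynomial (Fin 2) ℤ) ^ (p - (s - 1))
          * (X 1) ^ (n - p + s - 1)) * e1
        + (MvPolynomial.C (d (s - 1)) * (X 0 : MvPolynomial (Fin 2) ℤ) ^ (n - 1)) * e2
    rw [he]; exact Ideal.zero_mem I
  · rw [if_neg h1, if_neg h2]
    rw [add_zero, sub_zero]
    have he : MvPolynomial.C (d i) * (X 0 : MvPolynomial (Fin 2) ℤ) ^ i * (X 1) ^ (p - i)
          * (X 1) ^ (n - p + s - 1) * (X 0) ^ (n - s)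
        = MvPolynomial.C (d i) * (X 0) ^ (i + (n - s)) * (X 1) ^ ((p - i) + (n - p + s - 1)) := by
      ring
    rw [he]
    rcases lt_or_ge i s with hl | hg
    · exact hmonoY _ _ _ (by omega)
    · exact hmonoX _ _ _ (by omega)
end
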